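/- Let X be a Polish Abelian group and let A be a closed subset of X. Then A is Haar-meager if and only if A is not Haar-open. -/

import Mathlib

open Set Filter Topology Pointwise MeasureTheory

/-- A Borel set `A` in a topological Abelian group is *Haar-meager* if there is a continuous
map `f` from the Cantor cube `ℕ → Bool` such that `f ⁻¹' (A + x)` is meager for every `x`. -/
def HaarMeager {X : Type*} [TopologicalSpace X] [AddCommGroup X] (A : Set X) : Prop :=
  ∃ f : (ℕ → Bool) → X, Continuous f ∧ ∀ x : X, IsMeagre (f ⁻¹' ((fun a => a + x) '' A))

/-- A set `A` is *Haar-null* if there is a Borel probability measure `μ` on `X` such that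
`μ (A + x) = 0` for every `x ∈ X`. -/
def HaarNull {X : Type*} [MeasurableSpace X] [AddCommGroup X] (A : Set X) : Prop :=
  ∃ μ : Measure X, IsProbabilityMeasure μ ∧ ∀ x : X, μ ((fun a => a + x) '' A) = 0

/-- A subset `T` of the Cantor cube is *thin* if for every coordinate `n`, any two elements
of `T` agreeing at all coordinates except possibly `n` are equal. -/
def IsThinSet (T : Set (ℕ → Bool)) : Prop :=
  ∀ n : ℕ, ∀ s ∈ T, ∀ t ∈ T, (∀ m : ℕ, m ≠ n → s m = t m) → s = t

/-- A set `A` is *Haar-thin* if there is a continuous map `f` from the Cantor cube such that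
`f ⁻¹' (A + x)` is thin for every `x`. -/
def HaarThin {X : Type*} [TopologicalSpace X] [AddCommGroup X] (A : Set X) : Prop :=
  ∃ f : (ℕ → Bool) → X, Continuous f ∧ ∀ x : X, IsThinSet (f ⁻¹' ((fun a => a + x) '' A))

/-- A set `A` is *null-finite* if there is a null sequence `(x n)` such that
`{n | x n + y ∈ A}` is finite for every `y`. -/
def NullFinite {X : Type*} [TopologicalSpace X] [AddCommGroup X] (A : Set X) : Prop :=
  ∃ x : ℕ → X, Tendsto x atTop (nhds 0) ∧ ∀ y : X, {n : ℕ | x n + y ∈ A}.Finite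

/-- A set `A` is *Haar-open* if for every compact `K` and `p ∈ K` there is `x` such that
`K ∩ (A + x)` is a neighborhood of `p` in the subspace `K`. -/
def HaarOpen {X : Type*} [TopologicalSpace X] [AddCommGroup X] (A : Set X) : Prop :=
  ∀ K : Set X, IsCompact K → ∀ p ∈ K, ∃ x : X,
    K ∩ ((fun a => a + x) '' A) ∈ nhdsWithin p K


/-- Index-decoding map: reads off, from the bits `s (Nat.pair n i)` for `i ≤ N n`, a number
`≤ N n` (the first `i` whose bit is set, or `N n` if none). -/
def cantorIdx (N : ℕ → ℕ) (n : ℕ) (s : ℕ → Bool) : ℕ :=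
  Nat.find (⟨N n, Or.inl rfl⟩ : ∃ i, i = N n ∨ (i ≤ N n ∧ s (Nat.pair n i) = true))

lemma cantorIdx_le (N : ℕ → ℕ) (n : ℕ) (s : ℕ → Bool) : cantorIdx N n s ≤ N n :=
  Nat.find_min' _ (Or.inl rfl)

lemma cantorIdx_congr {N : ℕ → ℕ} {n : ℕ} {s t : ℕ → Bool}
    (h : ∀ i ≤ N n, s (Nat.pair n i) = t (Nat.pair n i)) :
    cantorIdx N n s = cantorIdx N n t := by
  have key : ∀ s t : ℕ → Bool, (∀ i ≤ N n, s (Nat.pair n i) = t (Nat.pair n i)) →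
      cantorIdx N n t ≤ cantorIdx N n s := by
    intro s t h
    apply Nat.find_min'
    rcases Nat.find_spec (⟨N n, Or.inl rfl⟩ :
        ∃ i, i = N n ∨ (i ≤ N n ∧ s (Nat.pair n i) = true)) with h1 | ⟨h1, h2⟩
    · exact Or.inl h1
    · exact Or.inr ⟨h1, (h _ h1) ▸ h2⟩
  exact le_antisymm (key t s fun i hi => (h i hi).symm) (key s t h)

lemma cantorIdx_eq {N : ℕ → ℕ} {n j : ℕ} {s : ℕ → Bool} (hj : j ≤ N n)
    (hs : ∀ i, s (Nat.pair n i) = true ↔ i = j) :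
    cantorIdx N n s = j := by
  unfold cantorIdx
  have h : ∃ i, i = N n ∨ (i ≤ N n ∧ s (Nat.pair n i) = true) := ⟨N n, Or.inl rfl⟩
  have hle : Nat.find h ≤ j := Nat.find_min' h (Or.inr ⟨hj, (hs j).mpr rfl⟩)
  rcases Nat.find_spec h with h1 | ⟨_, h2⟩
  · omega
  · exact (hs _).mp h2

open scoped Classical in
/-- The guided walk used to build a continuous surjection from the Cantor cube onto a
compact metric set.  `q` is a dense sequence, `N` gives net sizes, `D` a diameter bound. -/
noncomputable def cantorWalk {E : Type*} [MetricSpace E] (q : ℕ → E) (N : ℕ → ℕ) (D : ℝ)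
    (s : ℕ → Bool) : ℕ → E
  | 0 => q 0
  | (n+1) =>
      if dist (cantorWalk q N D s n) (q (cantorIdx N n s)) ≤ D * (1/2)^n
      then q (cantorIdx N n s) else cantorWalk q N D s n

lemma cantorWalk_mem {E : Type*} [MetricSpace E] {q : ℕ → E} {N : ℕ → ℕ} {D : ℝ}
    {M : Set E} (hq : ∀ j, q j ∈ M) (s : ℕ → Bool) : ∀ n, cantorWalk q N D s n ∈ M := by
  intro n
  induction n with
  | zero => exact hq 0
  | succ n ih =>
      rw [cantorWalk]
      split <;> simp [hq, ih]

lemma cantorWalk_step {E : Type*} [MetricSpace E] (q : ℕ → E) (N : ℕ → ℕ) {D : ℝ}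
    (hD : 0 ≤ D) (s : ℕ → Bool) (n : ℕ) :
    dist (cantorWalk q N D s n) (cantorWalk q N D s (n+1)) ≤ D * (1/2)^n := by
  rw [cantorWalk]
  split
  · next h => exact h
  · next h => simp; positivity

lemma cantorWalk_congr {E : Type*} [MetricSpace E] (q : ℕ → E) (N : ℕ → ℕ) (D : ℝ)
    {s t : ℕ → Bool} : ∀ n, (∀ m < n, ∀ i ≤ N m, s (Nat.pair m i) = t (Nat.pair m i)) →
    cantorWalk q N D s n = cantorWalk q N D t n := by
  intro n
  induction n with
  | zero => intro _; rfl
  | succ n ih =>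
      intro h
      have h1 : cantorWalk q N D s n = cantorWalk q N D t n :=
        ih fun m hm => h m (hm.trans (Nat.lt_succ_self n))
      have h2 : cantorIdx N n s = cantorIdx N n t :=
        cantorIdx_congr (h n (Nat.lt_succ_self n))
      rw [cantorWalk, cantorWalk, h1, h2]

/-- Every nonempty compact subset of a second-countable metric space is the range of a
continuous map from the Cantor cube. -/
theorem exists_cantor_surjection {E : Type*} [MetricSpace E] [SecondCountableTopology E]
    {M : Set E} (hM : IsCompact M) (hne : M.Nonempty) :
    ∃ v : (ℕ → Bool) → E, Continuous v ∧ Set.range v = M := by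
  haveI : CompactSpace M := isCompact_iff_compactSpace.mp hM
  haveI : Nonempty M := hne.to_subtype
  obtain ⟨q', hq'⟩ := TopologicalSpace.exists_dense_seq M
  set q : ℕ → E := fun n => (q' n : E) with hq_def
  have hqM : ∀ j, q j ∈ M := fun j => (q' j).2
  -- density of `q` in `M`
  have hdense : ∀ m ∈ M, ∀ ε : ℝ, 0 < ε → ∃ j, dist (q j) m < ε := by
    intro m hm ε hε
    have : (⟨m, hm⟩ : M) ∈ closure (Set.range q') := hq' _
    rcases Metric.mem_closure_range_iff.1 this ε hε with ⟨j, hj⟩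
    exact ⟨j, by rw [dist_comm]; exact hj⟩
  -- diameter bound
  obtain ⟨C, hC⟩ := Metric.isBounded_iff.1 hM.isBounded
  set D : ℝ := max C 1 with hD_def
  have hD1 : (1:ℝ) ≤ D := le_max_right _ _
  have hD0 : (0:ℝ) ≤ D := zero_le_one.trans hD1
  have hDdist : ∀ x ∈ M, ∀ y ∈ M, dist x y ≤ D := fun x hx y hy =>
    (hC hx hy).trans (le_max_left _ _)
  -- net sizes
  have hNet : ∀ n : ℕ, ∃ Nn : ℕ, ∀ m ∈ M, ∃ j ≤ Nn, dist (q j) m < D * (1/2)^(n+2) := by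
    intro n
    have hδ : (0:ℝ) < D * (1/2)^(n+2) := by positivity
    obtain ⟨t, ht⟩ := hM.elim_finite_subcover (fun j => Metric.ball (q j) (D * (1/2)^(n+2)))
      (fun j => Metric.isOpen_ball) (by
        intro m hm
        rcases hdense m hm _ hδ with ⟨j, hj⟩
        exact Set.mem_iUnion.2 ⟨j, by rwa [Metric.mem_ball, dist_comm]⟩)
    refine ⟨t.sup id, fun m hm => ?_⟩
    rcases Set.mem_iUnion₂.1 (ht hm) with ⟨j, hjt, hj⟩
    exact ⟨j, Finset.le_sup (f := id) hjt, by rwa [Metric.mem_ball, dist_comm] at hj⟩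
  choose N hN using hNet
  -- the walk is Cauchy with limit in M
  have hcauchy : ∀ s : ℕ → Bool, CauchySeq (cantorWalk q N D s) := fun s =>
    cauchySeq_of_le_geometric (1/2) D (by norm_num) (cantorWalk_step q N hD0 s)
  have hlim : ∀ s : ℕ → Bool, ∃ l ∈ M, Tendsto (cantorWalk q N D s) atTop (𝓝 l) := fun s =>
    cauchySeq_tendsto_of_isComplete hM.isComplete (cantorWalk_mem hqM s) (hcauchy s)
  choose v hvM hvt using hlim
  have hdist_lim : ∀ s n, dist (cantorWalk q N D s n) (v s) ≤ D * (1/2)^n / (1 - 1/2) :=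
    fun s n => dist_le_of_le_geometric_of_tendsto (1/2) D (by norm_num)
      (cantorWalk_step q N hD0 s) (hvt s) n
  refine ⟨v, ?_, ?_⟩
  · -- continuity
    rw [continuous_iff_continuousAt]
    intro s
    rw [ContinuousAt, Metric.tendsto_nhds]
    intro ε hε
    obtain ⟨n, hn⟩ : ∃ n : ℕ, D * (1/2)^n / (1 - 1/2) * 2 < ε := by
      have h2 : Tendsto (fun n : ℕ => D * (1/2)^n / (1 - 1/2) * 2) atTop (𝓝 0) := by
        have := tendsto_pow_atTop_nhds_zero_of_lt_one (by norm_num : (0:ℝ) ≤ 1/2)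
          (by norm_num : (1:ℝ)/2 < 1)
        simpa using ((this.const_mul D).div_const (1 - 1/2)).mul_const 2
      rcases (h2.eventually (eventually_lt_nhds hε)).exists with ⟨n, hn⟩
      exact ⟨n, hn⟩
    have hopen : IsOpen {t : ℕ → Bool | ∀ m < n, ∀ i ≤ N m, t (Nat.pair m i) = s (Nat.pair m i)} := by
      have : {t : ℕ → Bool | ∀ m < n, ∀ i ≤ N m, t (Nat.pair m i) = s (Nat.pair m i)} =
          ⋂ m ∈ Finset.range n, ⋂ i ∈ Finset.range (N m + 1),
            (fun t : ℕ → Bool => t (Nat.pair m i)) ⁻¹' {s (Nat.pair m i)} := by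
        ext t
        simp only [Set.mem_setOf_eq, Set.mem_iInter, Finset.mem_range, Set.mem_preimage,
          Set.mem_singleton_iff]
        constructor
        · intro h m hm i hi; exact h m hm i (Nat.lt_succ_iff.mp hi)
        · intro h m hm i hi; exact h m hm i (Nat.lt_succ_iff.mpr hi)
      rw [this]
      refine isOpen_biInter_finset fun m _ => isOpen_biInter_finset fun i _ => ?_
      exact (continuous_apply _).isOpen_preimage _ (isOpen_discrete _)
    filter_upwards [hopen.mem_nhds (by simp [Set.mem_setOf_eq])] with t ht
    have heq : cantorWalk q N D t n = cantorWalk q N D s n :=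
      cantorWalk_congr q N D n fun m hm i hi => ht m hm i hi
    calc dist (v t) (v s)
        ≤ dist (v t) (cantorWalk q N D t n) + dist (cantorWalk q N D t n) (v s) :=
          dist_triangle _ _ _
      _ = dist (cantorWalk q N D t n) (v t) + dist (cantorWalk q N D s n) (v s) := by
          rw [dist_comm, heq]
      _ ≤ D * (1/2)^n / (1 - 1/2) + D * (1/2)^n / (1 - 1/2) :=
          add_le_add (hdist_lim t n) (hdist_lim s n)
      _ < ε := by linarith
  · -- range v = M
    apply Set.Subset.antisymm
    · rintro _ ⟨s, rfl⟩; exact hvM s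
    · intro m hm
      -- choose approximating indices
      have hsel : ∀ n : ℕ, ∃ j ≤ N n, dist (q j) m < D * (1/2)^(n+2) := fun n => hN n m hm
      choose jj hjjle hjjdist using hsel
      set s : ℕ → Bool := fun x => decide ((Nat.unpair x).2 = jj ((Nat.unpair x).1)) with hs_def
      have hbit : ∀ n i, s (Nat.pair n i) = true ↔ i = jj n := by
        intro n i; simp [hs_def, Nat.unpair_pair]
      have hidx : ∀ n, cantorIdx N n s = jj n := fun n => cantorIdx_eq (hjjle n) (hbit n)
      have hpow : ∀ k : ℕ, D * (1/2:ℝ)^(k+2) + D * (1/2)^(k+3) ≤ D * (1/2)^(k+1) := by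
        intro k
        have h := pow_nonneg (by norm_num : (0:ℝ) ≤ 1/2) k
        have e2 : (1/2:ℝ)^(k+2) = (1/2)^k * (1/4) := by rw [pow_add]; norm_num
        have e3 : (1/2:ℝ)^(k+3) = (1/2)^k * (1/8) := by rw [pow_add]; norm_num
        have e1 : (1/2:ℝ)^(k+1) = (1/2)^k * (1/2) := by rw [pow_add]; norm_num
        rw [e1, e2, e3]
        nlinarith [hD0, h]
      have hwalk : ∀ n, cantorWalk q N D s (n+1) = q (jj n) := by
        intro n
        induction n with
        | zero =>
            have e0 : cantorWalk q N D s 0 = q 0 := rfl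
            have hcond : dist (cantorWalk q N D s 0) (q (jj 0)) ≤ D * (1/2:ℝ)^(0:ℕ) := by
              rw [e0]
              simp only [pow_zero, mul_one]
              exact hDdist _ (hqM 0) _ (hqM (jj 0))
            rw [cantorWalk, hidx, if_pos hcond]
        | succ n ih =>
            have hcond : dist (cantorWalk q N D s (n+1)) (q (jj (n+1))) ≤ D * (1/2:ℝ)^(n+1) := by
              rw [ih]
              calc dist (q (jj n)) (q (jj (n+1)))
                  ≤ dist (q (jj n)) m + dist (q (jj (n+1))) m := dist_triangle_right _ _ _
                _ ≤ D * (1/2)^(n+2) + D * (1/2)^(n+3) :=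
                    add_le_add (hjjdist n).le (hjjdist (n+1)).le
                _ ≤ D * (1/2)^(n+1) := hpow n
            rw [cantorWalk, hidx, if_pos hcond]
      have hg : Tendsto (fun n : ℕ => D * (1/2:ℝ)^(n+2)) atTop (𝓝 0) := by
        have h1 : Tendsto (fun n : ℕ => ((1:ℝ)/2)^(n+2)) atTop (𝓝 0) :=
          (tendsto_pow_atTop_nhds_zero_of_lt_one (by norm_num : (0:ℝ) ≤ 1/2)
            (by norm_num : (1:ℝ)/2 < 1)).comp (tendsto_add_atTop_nat 2)
        simpa using h1.const_mul D
      have htm : Tendsto (cantorWalk q N D s) atTop (𝓝 m) := by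
        rw [← tendsto_add_atTop_iff_nat 1]
        rw [tendsto_iff_dist_tendsto_zero]
        exact squeeze_zero (fun n => dist_nonneg)
          (fun n => by rw [hwalk n]; exact (hjjdist n).le) hg
      exact ⟨s, tendsto_nhds_unique (hvt s) htm⟩

/-- Translating by an element close to `p` by `k - p` moves points of a compact set by at most
`ε`, for `k` close enough to `p`. -/
theorem small_translate_aux {X : Type*} [MetricSpace X] [AddCommGroup X]
    [IsTopologicalAddGroup X] (p : X) {C : Set X} (hC : IsCompact C) {ε : ℝ} (hε : 0 < ε) :
    ∃ r : ℝ, 0 < r ∧ ∀ z ∈ C, ∀ k : X, dist k p ≤ r → dist z (z + (k - p)) ≤ ε := by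
  have hcont : Continuous fun y : X × X => dist y.1 (y.1 + (y.2 - p)) :=
    continuous_fst.dist (continuous_fst.add (continuous_snd.sub continuous_const))
  have hopen : IsOpen {y : X × X | dist y.1 (y.1 + (y.2 - p)) < ε} :=
    isOpen_lt hcont continuous_const
  have hsub : C ×ˢ ({p} : Set X) ⊆ {y : X × X | dist y.1 (y.1 + (y.2 - p)) < ε} := by
    rintro ⟨z, k⟩ ⟨_, hk⟩
    simp only [Set.mem_singleton_iff] at hk
    subst hk
    simp [hε]
  obtain ⟨u, w, _, hwo, hCu, hpw, huw⟩ :=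
    generalized_tube_lemma hC isCompact_singleton hopen hsub
  obtain ⟨r, hr, hball⟩ := Metric.isOpen_iff.1 hwo p (hpw rfl)
  refine ⟨r/2, by positivity, fun z hz k hk => ?_⟩
  have hk' : k ∈ w := hball (by rw [Metric.mem_ball]; linarith)
  exact (huw (Set.mk_mem_prod (hCu hz) hk')).le

theorem statement12 {X : Type*} [TopologicalSpace X] [AddCommGroup X]
    [IsTopologicalAddGroup X] [PolishSpace X]
    (A : Set X) (hA : IsClosed A) :
    HaarMeager A ↔ ¬ HaarOpen A := by
  have himg : ∀ y : X, (fun a => a + y) '' A = (fun b => b - y) ⁻¹' A := by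
    intro y
    ext b
    simp only [Set.mem_image, Set.mem_preimage]
    constructor
    · rintro ⟨a, ha, rfl⟩
      simpa using ha
    · intro h
      exact ⟨b - y, h, sub_add_cancel b y⟩
  constructor
  · -- Haar-meager implies not Haar-open
    rintro ⟨f, hf, hmeag⟩ hopen
    letI := TopologicalSpace.upgradeIsCompletelyMetrizable (ℕ → Bool)
    obtain ⟨x, hx⟩ := hopen (Set.range f) (isCompact_range hf) (f fun _ => false)
      ⟨_, rfl⟩
    rw [mem_nhdsWithin] at hx
    obtain ⟨U, hUopen, hpU, hUK⟩ := hx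
    have hsub : f ⁻¹' U ⊆ f ⁻¹' ((fun a => a + x) '' A) := fun s hs =>
      (hUK ⟨hs, Set.mem_range_self s⟩).2
    have hmeag' : IsMeagre (f ⁻¹' U) := (hmeag x).mono hsub
    have hne : (f ⁻¹' U).Nonempty := ⟨fun _ => false, hpU⟩
    have hdense : Dense (f ⁻¹' U)ᶜ := dense_of_mem_residual hmeag'
    obtain ⟨s, hs1, hs2⟩ := hdense.inter_open_nonempty _ (hUopen.preimage hf) hne
    exact hs2 hs1
  · -- not Haar-open implies Haar-meager
    intro hno
    unfold HaarOpen at hno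
    push_neg at hno
    obtain ⟨K, hK, p, hpK, hbad⟩ := hno
    letI := TopologicalSpace.upgradeIsCompletelyMetrizable X
    -- choose radii making the series uniformly Cauchy
    have hstep : ∀ J : ℕ, ∃ r : ℝ, 0 < r ∧
        ∀ z ∈ (fun g : Fin J → X => p + ∑ i, (g i - p)) '' (Set.univ.pi fun _ => K),
        ∀ k : X, dist k p ≤ r → dist z (z + (k - p)) ≤ (1/2:ℝ)^J := by
      intro J
      have hCcomp : IsCompact ((fun g : Fin J → X => p + ∑ i, (g i - p)) ''
          (Set.univ.pi fun _ => K)) :=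
        (isCompact_univ_pi fun _ => hK).image
          (continuous_const.add (continuous_finset_sum _ fun i _ =>
            (continuous_apply i).sub continuous_const))
      exact small_translate_aux p hCcomp (by positivity)
    choose r hrpos hr using hstep
    -- Cantor-cube parametrizations of the small relative balls
    have hMj : ∀ j : ℕ, ∃ v : (ℕ → Bool) → X, Continuous v ∧
        Set.range v = K ∩ Metric.closedBall p (r j) := fun j =>
      exists_cantor_surjection (hK.inter_right Metric.isClosed_closedBall)
        ⟨p, hpK, Metric.mem_closedBall_self (hrpos j).le⟩
    choose v hvcont hvrange using hMj
    have hvmem : ∀ j t, v j t ∈ K ∩ Metric.closedBall p (r j) := fun j t =>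
      (hvrange j) ▸ Set.mem_range_self t
    -- blocks and partial sums
    set blk : ℕ → (ℕ → Bool) → (ℕ → Bool) := fun j s i => s (Nat.pair j i) with hblk
    have hblkcont : ∀ j, Continuous (blk j) := fun j => continuous_pi fun i => continuous_apply _
    set F : ℕ → (ℕ → Bool) → X :=
      fun J s => p + ∑ j ∈ Finset.range J, (v j (blk j s) - p) with hFdef
    have hFcont : ∀ J, Continuous (F J) := fun J =>
      continuous_const.add (continuous_finset_sum _ fun j _ =>
        ((hvcont j).comp (hblkcont j)).sub continuous_const)
    have hFD : ∀ J s, F J s ∈ (fun g : Fin J → X => p + ∑ i, (g i - p)) ''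
        (Set.univ.pi fun _ => K) := by
      intro J s
      refine ⟨fun i => v i (blk i s), fun i _ => (hvmem i _).1, ?_⟩
      simp only [hFdef]
      rw [Fin.sum_univ_eq_sum_range (fun i => (v i (blk i s) - p)) J]
    have hFsucc : ∀ J s, F (J+1) s = F J s + (v J (blk J s) - p) := by
      intro J s
      simp only [hFdef, Finset.sum_range_succ, add_assoc]
    have hFstep : ∀ s J, dist (F J s) (F (J+1) s) ≤ 1 * (1/2:ℝ)^J := by
      intro s J
      rw [hFsucc J s, one_mul]
      exact hr J _ (hFD J s) _ ((Metric.mem_closedBall).1 (hvmem J (blk J s)).2)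
    have hcau : ∀ s, CauchySeq fun J => F J s := fun s =>
      cauchySeq_of_le_geometric (1/2) 1 (by norm_num) (hFstep s)
    have hlim : ∀ s, ∃ l, Tendsto (fun J => F J s) atTop (𝓝 l) := fun s =>
      cauchySeq_tendsto_of_complete (hcau s)
    choose f hft using hlim
    have hub : ∀ s J, dist (F J s) (f s) ≤ 1 * (1/2:ℝ)^J / (1 - 1/2) := fun s J =>
      dist_le_of_le_geometric_of_tendsto (1/2) 1 (by norm_num) (hFstep s) (hft s) J
    have hunif : TendstoUniformly F f atTop := by
      rw [Metric.tendstoUniformly_iff]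
      intro ε hε
      have h1 : Tendsto (fun J : ℕ => 1 * ((1:ℝ)/2)^J / (1 - 1/2)) atTop (𝓝 0) := by
        have := tendsto_pow_atTop_nhds_zero_of_lt_one (by norm_num : (0:ℝ) ≤ 1/2)
          (by norm_num : (1:ℝ)/2 < 1)
        simpa using (this.const_mul (1:ℝ)).div_const (1 - 1/2)
      filter_upwards [h1.eventually (eventually_lt_nhds hε)] with J hJ s
      rw [dist_comm]
      exact (hub s J).trans_lt hJ
    have hfcont : Continuous f := hunif.continuous (Eventually.of_forall hFcont).frequently
    refine ⟨f, hfcont, fun x => ?_⟩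
    -- the preimage of every translate is closed with empty interior
    have hclosed : IsClosed (f ⁻¹' ((fun a => a + x) '' A)) := by
      rw [himg x]
      exact ((hA.preimage (continuous_id.sub continuous_const)).preimage hfcont)
    have hint : interior (f ⁻¹' ((fun a => a + x) '' A)) = ∅ := by
      by_contra hnonempty
      obtain ⟨s₀, hs₀⟩ := Set.nonempty_iff_ne_empty.2 hnonempty
      obtain ⟨I, u, hIu, hsubI⟩ := isOpen_pi_iff.1 isOpen_interior s₀ hs₀
      have hcyl : ∀ t : ℕ → Bool, (∀ m ∈ I, t m = s₀ m) →
          t ∈ f ⁻¹' ((fun a => a + x) '' A) := by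
        intro t ht
        exact interior_subset (hsubI fun m hm => (ht m hm) ▸ (hIu m hm).2)
      set j0 : ℕ := (I.sup fun m => (Nat.unpair m).1) + 1 with hj0def
      have hj0 : ∀ m ∈ I, (Nat.unpair m).1 < j0 := fun m hm =>
        Nat.lt_succ_of_le (Finset.le_sup (f := fun m => (Nat.unpair m).1) hm)
      set st : (ℕ → Bool) → (ℕ → Bool) := fun t m =>
        if (Nat.unpair m).1 = j0 then t (Nat.unpair m).2 else s₀ m with hstdef
      have hstcyl : ∀ t, st t ∈ f ⁻¹' ((fun a => a + x) '' A) := by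
        intro t
        apply hcyl
        intro m hm
        simp only [hstdef]
        rw [if_neg (Nat.ne_of_lt (hj0 m hm))]
      have hblkst : ∀ t j, j ≠ j0 → blk j (st t) = blk j s₀ := by
        intro t j hj
        funext i
        simp only [hblk, hstdef, Nat.unpair_pair]
        rw [if_neg hj]
      have hblkst0 : ∀ t, blk j0 (st t) = t := by
        intro t
        funext i
        show st t (Nat.pair j0 i) = t i
        simp [hstdef, Nat.unpair_pair]
      obtain ⟨tb, htb⟩ : ∃ tb, v j0 tb = p := by
        have : p ∈ Set.range (v j0) := by
          rw [hvrange j0]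
          exact ⟨hpK, Metric.mem_closedBall_self (hrpos j0).le⟩
        exact this
      have hGdiff : ∀ t J, j0 < J → F J (st t) = F J (st tb) + (v j0 t - p) := by
        intro t J hJ
        have key : ∀ t' : ℕ → Bool, ∑ j ∈ Finset.range J, (v j (blk j (st t')) - p)
            = (∑ j ∈ (Finset.range J).erase j0, (v j (blk j s₀) - p)) + (v j0 t' - p) := by
          intro t'
          rw [← Finset.sum_erase_add _ _ (Finset.mem_range.2 hJ), hblkst0 t']
          congr 1
          exact Finset.sum_congr rfl fun j hj =>
            by rw [hblkst t' j (Finset.ne_of_mem_erase hj)]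
        simp only [hFdef, key t, key tb, htb]
        abel
      have hfeq : ∀ t, f (st t) = f (st tb) + (v j0 t - p) := by
        intro t
        have h2 : Tendsto (fun J => F J (st t)) atTop (𝓝 (f (st tb) + (v j0 t - p))) := by
          apply ((hft (st tb)).add_const (v j0 t - p)).congr'
          filter_upwards [eventually_gt_atTop j0] with J hJ
          exact (hGdiff t J hJ).symm
        exact tendsto_nhds_unique (hft (st t)) h2
      -- derive that a relative neighborhood of p in K is inside a translate of A
      set w : X := x - f (st tb) + p with hwdef
      have hsubA : K ∩ Metric.closedBall p (r j0) ⊆ (fun a => a + w) '' A := by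
        intro k hk
        have hkv : k ∈ Set.range (v j0) := by rw [hvrange j0]; exact hk
        obtain ⟨t, rfl⟩ := hkv
        have hmem := hstcyl t
        rw [Set.mem_preimage, himg x, Set.mem_preimage] at hmem
        refine ⟨f (st t) - x, hmem, ?_⟩
        show f (st t) - x + w = v j0 t
        rw [hfeq t, hwdef]
        abel
      have hmemnhds : K ∩ ((fun a => a + w) '' A) ∈ nhdsWithin p K := by
        have h1 : K ∩ Metric.closedBall p (r j0) ∈ nhdsWithin p K :=
          Filter.inter_mem self_mem_nhdsWithin
            (mem_nhdsWithin_of_mem_nhds (Metric.closedBall_mem_nhds p (hrpos j0)))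
        exact Filter.mem_of_superset h1 fun k hk => ⟨hk.1, hsubA hk⟩
      exact hbad w hmemnhds
    -- closed with empty interior implies meagre
    rw [isMeagre_iff_countable_union_isNowhereDense]
    refine ⟨{f ⁻¹' ((fun a => a + x) '' A)}, ?_, Set.countable_singleton _, ?_⟩
    · intro t ht
      rw [Set.mem_singleton_iff] at ht
      subst ht
      exact hclosed.isNowhereDense_iff.2 hint
    · simp
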